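/- Let Λ be a finite simple graph with vertex set V and let e_1, …, e_m (m ≥ 2) be distinct vertices of Λ such that e_j and e_{j+1} are non-adjacent in Λ for 1 ≤ j ≤ m−1, and e_m and e_1 are non-adjacent in Λ. Let g be an element of the subgroup of G(Λ) generated by the generators corresponding to vertices in V ∖ {e_1,…,e_m}. If the element e_2 e_3 ⋯ e_m g e_m^{-1} ⋯ e_3^{-1} e_2^{-1} of G(Λ) lies in the subgroup generated by the generators corresponding to link(e_1) (the set of neighbors of e_1 in Λ), then e_1 e_2 ⋯ e_m g e_m^{-1} ⋯ e_2^{-1} e_1^{-1} = g in G(Λ). -/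

import Mathlib

/-- The set of relators of the right-angled Artin group of a simple graph:
commutators of generators corresponding to adjacent vertices. -/
def raagRels {V : Type*} (G : SimpleGraph V) : Set (FreeGroup V) :=
  {r | ∃ a b : V, G.Adj a b ∧
    r = FreeGroup.of a * FreeGroup.of b * (FreeGroup.of a)⁻¹ * (FreeGroup.of b)⁻¹}

/-- The right-angled Artin group of a simple graph. -/
abbrev RAAG {V : Type*} (G : SimpleGraph V) : Type _ :=
  PresentedGroup (raagRels G)

/-- The generator of the right-angled Artin group corresponding to a vertex. -/
def raagGen {V : Type*} (G : SimpleGraph V) (v : V) : RAAG G :=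
  PresentedGroup.of v

section Lift

variable {V : Type*} {Λ : SimpleGraph V} {H : Type*} [Group H]

/-- Universal property of the RAAG. -/
def raagLift (f : V → H) (hf : ∀ ⦃a b⦄, Λ.Adj a b → Commute (f a) (f b)) :
    RAAG Λ →* H :=
  PresentedGroup.toGroup (f := f) (by
    rintro r ⟨a, b, hab, rfl⟩
    have h := (hf hab)
    rw [← commutatorElement_eq_one_iff_commute] at h
    simpa [commutatorElement_def] using h)

@[simp] lemma raagLift_gen (f : V → H) (hf : ∀ ⦃a b⦄, Λ.Adj a b → Commute (f a) (f b)) (v : V) :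
    raagLift f hf (raagGen Λ v) = f v :=
  PresentedGroup.toGroup.of _

lemma raagHomExt {φ ψ : RAAG Λ →* H} (h : ∀ v, φ (raagGen Λ v) = ψ (raagGen Λ v)) :
    φ = ψ :=
  PresentedGroup.ext h

lemma raag_adj_commute {a b : V} (h : Λ.Adj a b) :
    Commute (raagGen Λ a) (raagGen Λ b) := by
  rw [← commutatorElement_eq_one_iff_commute]
  have h1 : PresentedGroup.mk (raagRels Λ)
      (FreeGroup.of a * FreeGroup.of b * (FreeGroup.of a)⁻¹ * (FreeGroup.of b)⁻¹) = 1 := by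
    apply (QuotientGroup.eq_one_iff _).mpr
    exact Subgroup.subset_normalClosure ⟨a, b, h, rfl⟩
  simpa [commutatorElement_def, raagGen, PresentedGroup.of] using h1

lemma commute_of_mem_closure {x : H} {S : Set H} (h : ∀ s ∈ S, Commute x s) {y : H}
    (hy : y ∈ Subgroup.closure S) : Commute x y := by
  have : Subgroup.closure S ≤ Subgroup.centralizer {x} := by
    rw [Subgroup.closure_le]
    intro s hs
    rw [SetLike.mem_coe, Subgroup.mem_centralizer_iff]
    rintro z hz
    rcases hz with rfl
    exact (h s hs).eq
  exact Subgroup.mem_centralizer_iff.mp (this hy) x rfl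

end Lift

section Maps

variable {V : Type*} (Λ : SimpleGraph V)

/-- Inclusion of the RAAG of an induced subgraph. -/
def raagIncl (S : Set V) : RAAG (Λ.induce S) →* RAAG Λ :=
  raagLift (fun u => raagGen Λ u.1) (fun a b hab => raag_adj_commute hab)

@[simp] lemma raagIncl_gen (S : Set V) (u : S) :
    raagIncl Λ S (raagGen (Λ.induce S) u) = raagGen Λ u.1 :=
  raagLift_gen _ _ _

/-- Inclusion between RAAGs of nested induced subgraphs. -/
def raagInclSub {S T : Set V} (h : S ⊆ T) : RAAG (Λ.induce S) →* RAAG (Λ.induce T) :=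
  raagLift (fun u => raagGen (Λ.induce T) ⟨u.1, h u.2⟩)
    (fun a b hab => raag_adj_commute hab)

@[simp] lemma raagInclSub_gen {S T : Set V} (h : S ⊆ T) (u : S) :
    raagInclSub Λ h (raagGen (Λ.induce S) u) = raagGen (Λ.induce T) ⟨u.1, h u.2⟩ :=
  raagLift_gen _ _ _

/-- Retraction of the RAAG of an induced subgraph onto that of a smaller one. -/
noncomputable def raagResSub {S T : Set V} (h : S ⊆ T) :
    RAAG (Λ.induce T) →* RAAG (Λ.induce S) := by
  classical
  exact raagLift (fun u => if hu : u.1 ∈ S then raagGen (Λ.induce S) ⟨u.1, hu⟩ else 1)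
    (by
      intro a b hab
      by_cases ha : a.1 ∈ S <;> by_cases hb : b.1 ∈ S <;>
        simp [ha, hb, Commute.one_left, Commute.one_right]
      exact raag_adj_commute hab)

lemma raagResSub_inclSub {S T : Set V} (h : S ⊆ T) :
    (raagResSub Λ h).comp (raagInclSub Λ h) = MonoidHom.id _ := by
  apply raagHomExt
  intro u
  simp only [MonoidHom.comp_apply, raagInclSub_gen, MonoidHom.id_apply]
  unfold raagResSub
  classical
  simp [u.2]

lemma raagInclSub_injective {S T : Set V} (h : S ⊆ T) :
    Function.Injective (raagInclSub Λ h) := by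
  have := raagResSub_inclSub Λ h
  intro x y hxy
  have hx : raagResSub Λ h (raagInclSub Λ h x) = raagResSub Λ h (raagInclSub Λ h y) := by
    rw [hxy]
  rwa [← MonoidHom.comp_apply, ← MonoidHom.comp_apply, this, MonoidHom.id_apply,
    MonoidHom.id_apply] at hx

lemma raagIncl_range (S : Set V) :
    (raagIncl Λ S).range = Subgroup.closure (raagGen Λ '' S) := by
  rw [MonoidHom.range_eq_map, ← PresentedGroup.closure_range_of (raagRels (Λ.induce S)),
    MonoidHom.map_closure]
  congr 1
  ext x
  constructor
  · rintro ⟨_, ⟨u, rfl⟩, rfl⟩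
    exact ⟨u.1, u.2, (raagIncl_gen Λ S u).symm⟩
  · rintro ⟨v, hv, rfl⟩
    exact ⟨raagGen (Λ.induce S) ⟨v, hv⟩, ⟨⟨v, hv⟩, rfl⟩, raagIncl_gen Λ S _⟩

end Maps

section Britton

open Monoid Monoid.PushoutI

/-- Britton's lemma style statement for amalgamated products. -/
lemma britton_conj {ι : Type*} {G : ι → Type*} [∀ i, Group (G i)] {H : Type*} [Group H]
    {φ : ∀ i, H →* G i} (hφ : ∀ i, Function.Injective (φ i)) {i j : ι} (hij : i ≠ j)
    {a : G i} (ha : a ∉ (φ i).range) (b : G j)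
    (h : of (φ := φ) i a * of j b * (of i a)⁻¹ ∈ (of (φ := φ) j).range) :
    b ∈ (φ j).range := by
  classical
  obtain ⟨z, hz⟩ := h
  by_contra hb
  by_cases hzr : z ∈ (φ j).range
  · -- then of j b ∈ range (of i) ⊓ range (of j)
    obtain ⟨c, rfl⟩ := hzr
    have h1 : of (φ := φ) j b = of i (a⁻¹ * φ i c * a) := by
      have : of (φ := φ) j (φ j c) = of i (φ i c) := by
        rw [of_apply_eq_base, of_apply_eq_base]
      rw [map_mul, map_mul, map_inv, ← this, hz]
      group
    have h2 : of (φ := φ) j b ∈ (of (φ := φ) i).range ⊓ (of (φ := φ) j).range :=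
      ⟨⟨_, h1.symm⟩, ⟨b, rfl⟩⟩
    rw [inf_of_range_eq_base_range hφ hij] at h2
    obtain ⟨k, hk⟩ := h2
    rw [← of_apply_eq_base (φ := φ) j k] at hk
    have := of_injective hφ j hk
    exact hb ⟨k, this⟩
  · -- reduced word of length 4 with product 1
    have hane : a ≠ 1 := by rintro rfl; exact ha (one_mem _)
    have hbne : b ≠ 1 := by rintro rfl; exact hb (one_mem _)
    have hzne : z ≠ 1 := by rintro rfl; exact hzr (one_mem _)
    have hainv : a⁻¹ ∉ (φ i).range := fun hr => ha (by simpa using inv_mem hr)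
    have hzinv : z⁻¹ ∉ (φ j).range := fun hr => hzr (by simpa using inv_mem hr)
    let w : CoprodI.Word G :=
      ⟨[⟨i, a⟩, ⟨j, b⟩, ⟨i, a⁻¹⟩, ⟨j, z⁻¹⟩], by
        simp_all [inv_ne_one], by
        simp [List.isChain_cons_cons, hij, hij.symm]⟩
    have hred : Reduced φ w := by
      intro g hg
      simp only [w, List.mem_cons, List.not_mem_nil, or_false] at hg
      rcases hg with rfl | rfl | rfl | rfl <;> assumption
    have hprod : ofCoprodI (φ := φ) w.prod = 1 := by
      have : ofCoprodI (φ := φ) w.prod =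
          of (φ := φ) i a * of j b * of i a⁻¹ * of j z⁻¹ := by
        simp [w, CoprodI.Word.prod, ofCoprodI_of, mul_assoc]
      rw [this, map_inv, map_inv, ← hz]
      group
    have := hred.eq_empty_of_mem_range hφ (by rw [hprod]; exact one_mem _)
    have : w.toList = [] := by rw [this]; rfl
    simp [w] at this

end Britton

section Pinch

variable {V : Type*} (Λ : SimpleGraph V) (v₀ : V)

open Monoid Monoid.PushoutI

/-- link and star -/
private def lkSet : Set V := {u | Λ.Adj v₀ u}
private def stSet : Set V := insert v₀ {u | Λ.Adj v₀ u}
private def coSet (v₀ : V) : Set V := {u | u ≠ v₀}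

private lemma lk_subset_st : lkSet Λ v₀ ⊆ stSet Λ v₀ := fun _ h => Set.mem_insert_of_mem _ h
private lemma lk_subset_co : lkSet Λ v₀ ⊆ coSet v₀ := by
  intro u h he
  exact Λ.irrefl (he ▸ h)

private def pFam : Bool → Set V := fun b => if b then coSet v₀ else stSet Λ v₀

private lemma lk_subset_pFam : ∀ i, lkSet Λ v₀ ⊆ pFam Λ v₀ i := by
  intro i; cases i
  · exact lk_subset_st Λ v₀
  · exact lk_subset_co Λ v₀

/-- maps of the pushout diagram -/
private def pPhi : ∀ i : Bool, RAAG (Λ.induce (lkSet Λ v₀)) →* RAAG (Λ.induce (pFam Λ v₀ i)) :=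
  fun i => raagInclSub Λ (lk_subset_pFam Λ v₀ i)

private lemma pPhi_injective : ∀ i, Function.Injective (pPhi Λ v₀ i) :=
  fun i => raagInclSub_injective Λ _

/-- The pushout -/
private abbrev pP := PushoutI (pPhi Λ v₀)

private lemma mem_st_v₀ : v₀ ∈ pFam Λ v₀ false := Set.mem_insert _ _
private lemma mem_co_of_lk {u : V} (hu : u ∈ lkSet Λ v₀) : u ∈ pFam Λ v₀ true :=
  lk_subset_co Λ v₀ hu
private lemma mem_st_of_lk {u : V} (hu : u ∈ lkSet Λ v₀) : u ∈ pFam Λ v₀ false :=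
  lk_subset_st Λ v₀ hu

open scoped Classical in
/-- The vertex map into the pushout. -/
private noncomputable def pXiFun (v : V) : pP Λ v₀ :=
  if h : v = v₀ then of (φ := pPhi Λ v₀) false (raagGen _ ⟨v₀, mem_st_v₀ Λ v₀⟩)
  else of (φ := pPhi Λ v₀) true (raagGen _ ⟨v, h⟩)

private lemma pXiFun_v₀ : pXiFun Λ v₀ v₀ =
    of (φ := pPhi Λ v₀) false (raagGen _ ⟨v₀, mem_st_v₀ Λ v₀⟩) :=
  dif_pos rfl

private lemma pXiFun_ne {v : V} (h : v ≠ v₀) : pXiFun Λ v₀ v =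
    of (φ := pPhi Λ v₀) true (raagGen _ ⟨v, h⟩) :=
  dif_neg h

private lemma pXi_key {u : V} (hu : u ∈ lkSet Λ v₀) :
    of (φ := pPhi Λ v₀) true
      (raagGen (Λ.induce (pFam Λ v₀ true)) ⟨u, mem_co_of_lk Λ v₀ hu⟩) =
    of (φ := pPhi Λ v₀) false
      (raagGen (Λ.induce (pFam Λ v₀ false)) ⟨u, mem_st_of_lk Λ v₀ hu⟩) := by
  have h1 : raagGen (Λ.induce (pFam Λ v₀ true)) ⟨u, mem_co_of_lk Λ v₀ hu⟩ =
      pPhi Λ v₀ true (raagGen (Λ.induce (lkSet Λ v₀)) ⟨u, hu⟩) := by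
    simp [pPhi]
  have h2 : raagGen (Λ.induce (pFam Λ v₀ false)) ⟨u, mem_st_of_lk Λ v₀ hu⟩ =
      pPhi Λ v₀ false (raagGen (Λ.induce (lkSet Λ v₀)) ⟨u, hu⟩) := by
    simp [pPhi]
  rw [h1, h2, of_apply_eq_base, of_apply_eq_base]

private lemma pXiFun_commute : ∀ ⦃a b : V⦄, Λ.Adj a b →
    Commute (pXiFun Λ v₀ a) (pXiFun Λ v₀ b) := by
  intro a b hab
  by_cases ha : a = v₀ <;> by_cases hb : b = v₀
  · exact absurd (ha ▸ hb ▸ hab) (Λ.irrefl)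
  · subst ha
    have hblk : b ∈ lkSet Λ a := hab
    rw [pXiFun_v₀, pXiFun_ne Λ a hb]
    have he : (⟨b, hb⟩ : {u // u ∈ pFam Λ a true}) = ⟨b, mem_co_of_lk Λ a hblk⟩ := rfl
    rw [he, pXi_key Λ a hblk]
    exact (raag_adj_commute (show (Λ.induce (pFam Λ a false)).Adj
      ⟨a, mem_st_v₀ Λ a⟩ ⟨b, mem_st_of_lk Λ a hblk⟩ from hab)).map _
  · subst hb
    have halk : a ∈ lkSet Λ b := hab.symm
    rw [pXiFun_v₀, pXiFun_ne Λ b ha]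
    have he : (⟨a, ha⟩ : {u // u ∈ pFam Λ b true}) = ⟨a, mem_co_of_lk Λ b halk⟩ := rfl
    rw [he, pXi_key Λ b halk]
    exact ((raag_adj_commute (show (Λ.induce (pFam Λ b false)).Adj
      ⟨b, mem_st_v₀ Λ b⟩ ⟨a, mem_st_of_lk Λ b halk⟩ from hab.symm)).map
      (of (φ := pPhi Λ b) false)).symm
  · rw [pXiFun_ne Λ v₀ ha, pXiFun_ne Λ v₀ hb]
    exact (raag_adj_commute (show (Λ.induce (pFam Λ v₀ true)).Adj
      ⟨a, ha⟩ ⟨b, hb⟩ from hab)).map _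

/-- The map from the RAAG to the pushout. -/
private noncomputable def pXi : RAAG Λ →* pP Λ v₀ :=
  raagLift (pXiFun Λ v₀) (pXiFun_commute Λ v₀)

private lemma pXi_gen_ne {v : V} (h : v ≠ v₀) :
    pXi Λ v₀ (raagGen Λ v) = of (φ := pPhi Λ v₀) true (raagGen _ ⟨v, h⟩) := by
  unfold pXi
  rw [raagLift_gen, pXiFun_ne Λ v₀ h]

private lemma pXi_gen_v₀ :
    pXi Λ v₀ (raagGen Λ v₀) = of (φ := pPhi Λ v₀) false (raagGen _ ⟨v₀, mem_st_v₀ Λ v₀⟩) := by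
  unfold pXi
  rw [raagLift_gen, pXiFun_v₀]

/-- The map back. -/
private noncomputable def pTheta : pP Λ v₀ →* RAAG Λ :=
  PushoutI.lift (fun i => raagIncl Λ (pFam Λ v₀ i)) (raagIncl Λ (lkSet Λ v₀)) (by
    intro i
    apply raagHomExt
    intro u
    simp [pPhi])

private lemma pTheta_pXi : (pTheta Λ v₀).comp (pXi Λ v₀) = MonoidHom.id _ := by
  apply raagHomExt
  intro v
  by_cases h : v = v₀
  · subst h
    simp [pXi_gen_v₀, pTheta]
  · simp [MonoidHom.comp_apply, pXi_gen_ne Λ v₀ h, pTheta]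

private lemma pXi_incl_co :
    (pXi Λ v₀).comp (raagIncl Λ (coSet v₀)) = of (φ := pPhi Λ v₀) true := by
  apply raagHomExt
  intro u
  have hu : u.1 ≠ v₀ := u.2
  simp only [MonoidHom.comp_apply, raagIncl_gen]
  rw [pXi_gen_ne Λ v₀ hu]
  rfl

private lemma pXi_incl_lk :
    (pXi Λ v₀).comp (raagIncl Λ (lkSet Λ v₀)) = base (pPhi Λ v₀) := by
  apply raagHomExt
  intro u
  have hu : u.1 ≠ v₀ := lk_subset_co Λ v₀ u.2
  simp only [MonoidHom.comp_apply, raagIncl_gen]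
  have hgen : raagGen (Λ.induce (pFam Λ v₀ true)) ⟨u.1, hu⟩ =
      pPhi Λ v₀ true (raagGen (Λ.induce (lkSet Λ v₀)) u) := by
    simp [pPhi]
  rw [pXi_gen_ne Λ v₀ hu, hgen, of_apply_eq_base]

/-- The generator of `v₀` inside the star RAAG is not in the image of the link RAAG. -/
private lemma genv₀_not_mem_range :
    raagGen (Λ.induce (pFam Λ v₀ false)) ⟨v₀, mem_st_v₀ Λ v₀⟩ ∉ (pPhi Λ v₀ false).range := by
  classical
  let ζ : RAAG (Λ.induce (pFam Λ v₀ false)) →* Multiplicative ℤ :=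
    raagLift (fun u => if u.1 = v₀ then Multiplicative.ofAdd 1 else 1)
      (fun a b _ => Commute.all _ _)
  rintro ⟨c, hc⟩
  have h1 : ζ.comp (pPhi Λ v₀ false) = 1 := by
    apply raagHomExt
    intro u
    have : u.1 ≠ v₀ := lk_subset_co Λ v₀ u.2
    simp [ζ, pPhi, this]
  have h2 : ζ (raagGen _ ⟨v₀, mem_st_v₀ Λ v₀⟩) = Multiplicative.ofAdd 1 := by
    simp [ζ]
  rw [← hc] at h2
  have h3 : ζ (pPhi Λ v₀ false c) = 1 := by
    rw [← MonoidHom.comp_apply, h1]; rfl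
  rw [h3] at h2
  exact absurd (congrArg Multiplicative.toAdd h2) (by simp)

/-- The main pinch lemma. -/
lemma raag_pinch {x y : RAAG Λ}
    (hx : x ∈ Subgroup.closure (raagGen Λ '' {u | u ≠ v₀}))
    (hy : y ∈ Subgroup.closure (raagGen Λ '' {u | u ≠ v₀}))
    (h : raagGen Λ v₀ * x * (raagGen Λ v₀)⁻¹ = y) :
    x = y ∧ x ∈ Subgroup.closure (raagGen Λ '' {u | Λ.Adj v₀ u}) := by
  classical
  have hx2 : x ∈ (raagIncl Λ (coSet v₀)).range := by
    rw [raagIncl_range]; exact hx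
  have hy2 : y ∈ (raagIncl Λ (coSet v₀)).range := by
    rw [raagIncl_range]; exact hy
  obtain ⟨x', hx'⟩ := hx2
  obtain ⟨y', hy'⟩ := hy2
  -- push to the pushout
  have hXx : pXi Λ v₀ x = of (φ := pPhi Λ v₀) true x' := by
    rw [← hx', ← MonoidHom.comp_apply, pXi_incl_co]
    rfl
  have hXy : pXi Λ v₀ y = of (φ := pPhi Λ v₀) true y' := by
    rw [← hy', ← MonoidHom.comp_apply, pXi_incl_co]
    rfl
  have heq : of (φ := pPhi Λ v₀) false (raagGen _ ⟨v₀, mem_st_v₀ Λ v₀⟩) *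
      of (φ := pPhi Λ v₀) true x' *
      (of (φ := pPhi Λ v₀) false (raagGen _ ⟨v₀, mem_st_v₀ Λ v₀⟩))⁻¹ =
      of (φ := pPhi Λ v₀) true y' := by
    rw [← hXx, ← hXy, ← pXi_gen_v₀, ← map_inv, ← map_mul, ← map_mul, h]
  have hbmem : x' ∈ (pPhi Λ v₀ true).range := by
    apply britton_conj (pPhi_injective Λ v₀) (Bool.noConfusion : false ≠ true)
      (genv₀_not_mem_range Λ v₀)
    exact ⟨y', heq.symm⟩
  obtain ⟨c, hc⟩ := hbmem
  -- x = ι_C c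
  have hxc : x = raagIncl Λ (lkSet Λ v₀) c := by
    have h1 : pXi Λ v₀ x = pXi Λ v₀ (raagIncl Λ (lkSet Λ v₀) c) := by
      have e1 : of (φ := pPhi Λ v₀) true (pPhi Λ v₀ true c) = base (pPhi Λ v₀) c :=
        of_apply_eq_base _ _ _
      have e2 : pXi Λ v₀ (raagIncl Λ (lkSet Λ v₀) c) = base (pPhi Λ v₀) c := by
        rw [← MonoidHom.comp_apply, pXi_incl_lk]
      rw [hXx, ← hc, e1, e2]
    have := congrArg (pTheta Λ v₀) h1
    rwa [← MonoidHom.comp_apply, ← MonoidHom.comp_apply, pTheta_pXi, MonoidHom.id_apply,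
      MonoidHom.id_apply] at this
  have hxlk : x ∈ Subgroup.closure (raagGen Λ '' {u | Λ.Adj v₀ u}) := by
    rw [hxc, ← raagIncl_range]
    exact ⟨c, rfl⟩
  refine ⟨?_, hxlk⟩
  -- v₀ commutes with x
  have hcomm : Commute (raagGen Λ v₀) x := by
    apply commute_of_mem_closure _ hxlk
    rintro s ⟨u, hu, rfl⟩
    exact raag_adj_commute hu
  rw [← h, hcomm.eq]
  group

end Pinch

section Chain

variable {V : Type*} (Λ : SimpleGraph V)

/-- Product of generators along a list of vertices. -/
def gensProd (l : List V) : RAAG Λ := (l.map (raagGen Λ)).prod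

@[simp] lemma gensProd_nil : gensProd Λ ([] : List V) = 1 := rfl

@[simp] lemma gensProd_cons (a : V) (l : List V) :
    gensProd Λ (a :: l) = raagGen Λ a * gensProd Λ l := by
  simp [gensProd]

lemma gensProd_mem {l : List V} {s : Set V} (h : ∀ u ∈ l, u ∈ s) :
    gensProd Λ l ∈ Subgroup.closure (raagGen Λ '' s) := by
  induction l with
  | nil => exact one_mem _
  | cons a t ih =>
    rw [gensProd_cons]
    exact mul_mem (Subgroup.subset_closure ⟨a, h a (List.mem_cons_self), rfl⟩)
      (ih fun u hu => h u (List.mem_cons_of_mem a hu))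

lemma raag_chain_lemma : ∀ (l : List V) (v : V) (g : RAAG Λ),
    List.Chain (fun a b => ¬ Λ.Adj a b) v l →
    (v :: l).Nodup →
    g ∈ Subgroup.closure (raagGen Λ '' {u | u ∉ v :: l}) →
    gensProd Λ l * g * (gensProd Λ l)⁻¹ ∈
      Subgroup.closure (raagGen Λ '' {u | Λ.Adj v u}) →
    gensProd Λ l * g * (gensProd Λ l)⁻¹ = g ∧
      g ∈ Subgroup.closure (raagGen Λ '' {u | Λ.Adj v u})
  | [], v, g => by
    intro _ _ _ hp
    refine ⟨by simp, ?_⟩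
    simpa using hp
  | b :: t, v, g => by
    intro hchain hnodup hg hp
    rw [show List.Chain _ v (b :: t) = List.IsChain _ (v :: b :: t) from rfl, List.chain_cons] at hchain
    obtain ⟨hvb, hchain'⟩ := hchain
    set x := gensProd Λ t * g * (gensProd Λ t)⁻¹ with hxdef
    have hyx : gensProd Λ (b :: t) * g * (gensProd Λ (b :: t))⁻¹ =
        raagGen Λ b * x * (raagGen Λ b)⁻¹ := by
      rw [gensProd_cons, hxdef]
      group
    -- nodup facts
    have hnodup' : (v :: t).Nodup := by
      rcases List.nodup_cons.mp hnodup with ⟨hv, hbt⟩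
      exact List.nodup_cons.mpr ⟨fun hvt => hv (List.mem_cons_of_mem b hvt),
        (List.nodup_cons.mp hbt).2⟩
    have hbnott : b ∉ t := (List.nodup_cons.mp (List.nodup_cons.mp hnodup).2).1
    have hvneb : v ≠ b := by
      rintro rfl
      exact (List.nodup_cons.mp hnodup).1 (List.mem_cons_self)
    -- x avoids b
    have hxmem : x ∈ Subgroup.closure (raagGen Λ '' {u | u ≠ b}) := by
      have hgmem : g ∈ Subgroup.closure (raagGen Λ '' {u | u ≠ b}) := by
        refine Subgroup.closure_mono (Set.image_mono ?_) hg
        intro u hu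
        exact fun he => hu (by rw [he]; exact List.mem_cons_of_mem v (List.mem_cons_self))
      have hwt : gensProd Λ t ∈ Subgroup.closure (raagGen Λ '' {u | u ≠ b}) :=
        gensProd_mem Λ (fun u hu => fun he => hbnott (he ▸ hu))
      exact mul_mem (mul_mem hwt hgmem) (inv_mem hwt)
    have hymem : raagGen Λ b * x * (raagGen Λ b)⁻¹ ∈
        Subgroup.closure (raagGen Λ '' {u | u ≠ b}) := by
      rw [← hyx]
      refine Subgroup.closure_mono (Set.image_mono ?_) hp
      intro u hu
      exact fun he => hvb (he ▸ hu)
    obtain ⟨hxy, hxlk⟩ := raag_pinch Λ b hxmem hymem rfl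
    -- apply the induction hypothesis
    have hgmem' : g ∈ Subgroup.closure (raagGen Λ '' {u | u ∉ b :: t}) := by
      refine Subgroup.closure_mono (Set.image_mono ?_) hg
      intro u hu hmem
      exact hu (List.mem_cons_of_mem v hmem)
    obtain ⟨hxg, hglk⟩ := raag_chain_lemma t b g hchain'
      (List.nodup_cons.mp hnodup).2 hgmem' (by rw [← hxdef]; exact hxlk)
    have hxg' : x = g := by rw [hxdef]; exact hxg
    have hmain : gensProd Λ (b :: t) * g * (gensProd Λ (b :: t))⁻¹ = g := by
      rw [hyx, ← hxy, hxg']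
    exact ⟨hmain, hmain ▸ hp⟩

end Chain

lemma chain_ofFn {α : Type*} (R : α → α → Prop) :
    ∀ (n : ℕ) (f : Fin (n + 1) → α),
    (∀ (i : Fin (n + 1)) (hi : (i : ℕ) + 1 < n + 1), R (f i) (f ⟨(i : ℕ) + 1, hi⟩)) →
    List.Chain R (f 0) (List.ofFn (fun j : Fin n => f j.succ))
  | 0, f, _ => by
    rw [show List.ofFn (fun j : Fin 0 => f j.succ) = [] from List.ofFn_zero]
    exact List.Chain.nil
  | (n + 1), f, h => by
    rw [List.ofFn_succ]
    exact List.Chain.cons (h 0 (by simp only [Fin.val_zero]; omega)) (chain_ofFn R n (fun j => f j.succ)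
      (fun i hi => h i.succ (by simp only [Fin.val_succ]; omega)))

theorem raag_pinch_propagates {V : Type*} [Fintype V] (Λ : SimpleGraph V)
    (m : ℕ) (hm : 2 ≤ m) (e : Fin m → V) (he : Function.Injective e)
    (hnonadj : ∀ j : Fin m, ∀ hj : (j : ℕ) + 1 < m, ¬ Λ.Adj (e j) (e ⟨(j : ℕ) + 1, hj⟩))
    (hnonadj' : ¬ Λ.Adj (e ⟨m - 1, by omega⟩) (e ⟨0, by omega⟩))
    (g : RAAG Λ)
    (hg : g ∈ Subgroup.closure (raagGen Λ '' {u : V | u ∉ Set.range e}))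
    (w₂ : RAAG Λ)
    (hw₂ : w₂ = (List.ofFn fun j : Fin (m - 1) =>
      raagGen Λ (e ⟨(j : ℕ) + 1, by have := j.isLt; omega⟩)).prod)
    (hpinch : w₂ * g * w₂⁻¹ ∈
      Subgroup.closure (raagGen Λ '' {u : V | Λ.Adj (e ⟨0, by omega⟩) u})) :
    (raagGen Λ (e ⟨0, by omega⟩) * w₂) * g * (raagGen Λ (e ⟨0, by omega⟩) * w₂)⁻¹ = g := by
  obtain ⟨m', rfl⟩ : ∃ m', m = m' + 2 := ⟨m - 2, by omega⟩
  set v : V := e 0 with hv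
  set l : List V := List.ofFn (fun j : Fin (m' + 1) => e j.succ) with hl
  -- identify w₂ with gensProd l
  have hw₂' : w₂ = gensProd Λ l := by
    rw [hw₂, hl, gensProd, List.map_ofFn]
    rfl
  -- chain of nonadjacency
  have hchain : List.Chain (fun a b => ¬ Λ.Adj a b) v l :=
    chain_ofFn (fun a b => ¬ Λ.Adj a b) (m' + 1) e hnonadj
  -- v :: l = ofFn e
  have hvl : v :: l = List.ofFn e := (List.ofFn_succ (f := e)).symm
  have hnodup : (v :: l).Nodup := by
    rw [hvl]
    exact (List.nodup_ofFn).mpr he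
  -- membership of g
  have hset : {u : V | u ∉ Set.range e} = {u : V | u ∉ v :: l} := by
    ext u
    rw [Set.mem_setOf_eq, Set.mem_setOf_eq, hvl]
    simp only [List.mem_ofFn, Set.mem_range]
  have hg' : g ∈ Subgroup.closure (raagGen Λ '' {u : V | u ∉ v :: l}) := by
    rw [← hset]; exact hg
  -- the pinch hypothesis
  have hp' : gensProd Λ l * g * (gensProd Λ l)⁻¹ ∈
      Subgroup.closure (raagGen Λ '' {u : V | Λ.Adj v u}) := by
    rw [← hw₂']
    exact hpinch
  obtain ⟨h1, h2⟩ := raag_chain_lemma Λ l v g hchain hnodup hg' hp'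
  have hcomm : Commute (raagGen Λ v) g := by
    apply commute_of_mem_closure _ h2
    rintro s ⟨u, hu, rfl⟩
    exact raag_adj_commute hu
  show (raagGen Λ v * w₂) * g * (raagGen Λ v * w₂)⁻¹ = g
  have hexp : (raagGen Λ v * w₂) * g * (raagGen Λ v * w₂)⁻¹ =
      raagGen Λ v * (w₂ * g * w₂⁻¹) * (raagGen Λ v)⁻¹ := by
    group
  rw [hexp, hw₂', h1, hcomm.eq, mul_inv_cancel_right]
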